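/- There is a sufficiently large constant C ≥ 1 such that the following holds. Let N, N₀, R, q be positive integers with N divisible by 6, N₀ ≤ 2N/3, R ≤ N/6 ≤ N₀ − N/6, and 3·log₂(q) ≤ log₂( C(5N/6, N/6) ) − C, where C(a,b) denotes the binomial coefficient. Let Ψ be a uniformly random function from the family of all N₀-element subsets of [N] to [q] (i.e., the values Ψ(S) are i.i.d. uniform on [q]). Then with probability at least 1 − N^{R+1} · 2^{ − C(5N/6, N/6) / (C·q²) } over the choice of Ψ, the following holds: for every subset Q ⊆ [N] with |Q| ≤ R and every j ∈ [q], P_{T ∼ Unif}( Ψ(T) = j | Q ⊆ T ) ≤ 2/q, where T is drawn uniformly at random from the N₀-element subsets of [N]. -/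

import Mathlib

open Finset
open scoped Classical

lemma aux_choose_mono_aux (n : ℕ) : ∀ i j, j ≤ i → 2 * i ≤ n → n.choose j ≤ n.choose i := by
  intro i
  induction i with
  | zero => intro j hj _; simp_all
  | succ i ih =>
    intro j hj h2
    rcases Nat.eq_or_lt_of_le hj with rfl | hlt
    · exact le_refl _
    · exact (ih j (by omega) (by omega)).trans
        (Nat.choose_le_succ_of_lt_half_left (by omega))

lemma aux_choose_middle {n j k : ℕ} (hjk : j ≤ k) (hkn : k + j ≤ n) :
    n.choose j ≤ n.choose k := by
  by_cases h : 2 * k ≤ n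
  · exact aux_choose_mono_aux n k j hjk h
  · rw [← Nat.choose_symm (by omega : k ≤ n)]
    exact aux_choose_mono_aux n (n - k) j (by omega) (by omega)

lemma aux_mgf {α : Type*} [Fintype α] [DecidableEq α] (q : ℕ)
    (𝒯 : Finset α) (j : Fin q) :
    ∑ Ψ : α → Fin q, (2:ℝ) ^ ((𝒯.filter (fun T => Ψ T = j)).card) =
      ((q:ℝ)+1) ^ 𝒯.card * (q:ℝ) ^ (Fintype.card α - 𝒯.card) := by
  have key : ∀ Ψ : α → Fin q, (2:ℝ) ^ ((𝒯.filter (fun T => Ψ T = j)).card) =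
      ∏ T : α, (if T ∈ 𝒯 ∧ Ψ T = j then (2:ℝ) else 1) := by
    intro Ψ
    rw [← Finset.prod_filter_mul_prod_filter_not Finset.univ (fun T => T ∈ 𝒯 ∧ Ψ T = j)]
    have h1 : ∀ T ∈ Finset.univ.filter (fun T => T ∈ 𝒯 ∧ Ψ T = j),
        (if T ∈ 𝒯 ∧ Ψ T = j then (2:ℝ) else 1) = 2 := by
      intro T hT; simp at hT; simp [hT]
    have h2 : ∀ T ∈ Finset.univ.filter (fun T => ¬(T ∈ 𝒯 ∧ Ψ T = j)),
        (if T ∈ 𝒯 ∧ Ψ T = j then (2:ℝ) else 1) = 1 := by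
      intro T hT; simp at hT
      by_cases h : T ∈ 𝒯 <;> simp [h]; exact hT h
    rw [Finset.prod_congr rfl h1, Finset.prod_congr rfl h2, Finset.prod_const,
      Finset.prod_const, one_pow, mul_one]
    congr 1
    apply Finset.card_nbij' (fun T => T) (fun T => T) <;> intro x hx <;> simp at hx ⊢ <;> tauto
  simp_rw [key]
  rw [← Fintype.prod_sum (fun T b => if T ∈ 𝒯 ∧ b = j then (2:ℝ) else 1)]
  have hsum : ∀ T : α, (∑ b : Fin q, if T ∈ 𝒯 ∧ b = j then (2:ℝ) else 1) =
      if T ∈ 𝒯 then (q:ℝ) + 1 else (q:ℝ) := by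
    intro T
    by_cases h : T ∈ 𝒯
    · simp only [h, true_and, if_pos]
      have : ∀ b : Fin q, (if b = j then (2:ℝ) else 1) = (if b = j then (1:ℝ) else 0) + 1 := by
        intro b; split <;> norm_num
      simp_rw [this, Finset.sum_add_distrib, Finset.sum_ite_eq' Finset.univ j fun _ => (1:ℝ)]
      simp [add_comm]
    · simp [h]
  rw [Finset.prod_congr rfl (fun T _ => hsum T)]
  rw [← Finset.prod_filter_mul_prod_filter_not Finset.univ (fun T => T ∈ 𝒯)]
  rw [Finset.prod_congr rfl (fun T hT => by simp at hT; simp [hT] : ∀ T ∈ Finset.univ.filter (fun T => T ∈ 𝒯), (if T ∈ 𝒯 then (q:ℝ)+1 else (q:ℝ)) = (q:ℝ)+1)]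
  rw [Finset.prod_congr rfl (fun T hT => by simp at hT; simp [hT] : ∀ T ∈ Finset.univ.filter (fun T => T ∉ 𝒯), (if T ∈ 𝒯 then (q:ℝ)+1 else (q:ℝ)) = (q:ℝ))]
  rw [Finset.prod_const, Finset.prod_const]
  congr 2
  · rw [Finset.filter_mem_eq_inter, Finset.univ_inter]
  · rw [Finset.filter_not, Finset.filter_mem_eq_inter, Finset.univ_inter,
      Finset.card_sdiff_of_subset (Finset.subset_univ _), Finset.card_univ]

lemma aux_base (q : ℕ) (hq : 0 < q) : ((q:ℝ)+1) ≤ (q:ℝ) * (2:ℝ) ^ ((3:ℝ)/(2*(q:ℝ))) := by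
  have hq1 : (1:ℝ) ≤ (q:ℝ) := by exact_mod_cast hq
  have hqpos : (0:ℝ) < (q:ℝ) := by linarith
  have h2 : (2:ℝ) ^ ((3:ℝ)/(2*(q:ℝ))) = Real.exp ((3:ℝ)/(2*(q:ℝ)) * Real.log 2) := by
    rw [Real.rpow_def_of_pos two_pos, mul_comm]
  have hexp : 1 + (3:ℝ)/(2*(q:ℝ)) * Real.log 2 ≤ Real.exp ((3:ℝ)/(2*(q:ℝ)) * Real.log 2) := by
    have := Real.add_one_le_exp ((3:ℝ)/(2*(q:ℝ)) * Real.log 2)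
    linarith
  have hlog : (0.6931471803 : ℝ) < Real.log 2 := Real.log_two_gt_d9
  have hstep : 1 + 1/(q:ℝ) ≤ 1 + (3:ℝ)/(2*(q:ℝ)) * Real.log 2 := by
    have h1 : (3:ℝ)/(2*(q:ℝ)) * Real.log 2 - 1/(q:ℝ) = (3 * Real.log 2 - 2)/(2*(q:ℝ)) := by
      field_simp
    have h2 : (0:ℝ) ≤ (3 * Real.log 2 - 2)/(2*(q:ℝ)) := by
      apply div_nonneg (by linarith) (by linarith)
    linarith
  rw [h2]
  calc (q:ℝ) + 1 = (q:ℝ) * (1 + 1/(q:ℝ)) := by field_simp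
    _ ≤ (q:ℝ) * (1 + (3:ℝ)/(2*(q:ℝ)) * Real.log 2) := by nlinarith
    _ ≤ _ := by nlinarith [hexp]

lemma aux_pair {α : Type*} [Fintype α] [DecidableEq α] (q : ℕ) (hq : 0 < q)
    (𝒯 : Finset α) (j : Fin q) :
    ((Finset.univ.filter (fun Ψ : α → Fin q =>
        ¬ (((𝒯.filter (fun T => Ψ T = j)).card : ℝ) ≤ 2/(q:ℝ) * 𝒯.card))).card : ℝ)
      ≤ (q:ℝ) ^ (Fintype.card α) * (2:ℝ) ^ (-(𝒯.card:ℝ)/(2*(q:ℝ))) := by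
  set K := Fintype.card α with hK
  set m := 𝒯.card with hm
  set Bd := Finset.univ.filter (fun Ψ : α → Fin q =>
        ¬ (((𝒯.filter (fun T => Ψ T = j)).card : ℝ) ≤ 2/(q:ℝ) * m)) with hBd
  have hqpos : (0:ℝ) < (q:ℝ) := by exact_mod_cast hq
  have hmK : m ≤ K := by rw [hK, ← Finset.card_univ]; exact Finset.card_le_card (Finset.subset_univ _)
  have stepA : (Bd.card : ℝ) * (2:ℝ) ^ ((2*(m:ℝ)/(q:ℝ))) ≤
      ∑ Ψ : α → Fin q, (2:ℝ) ^ ((𝒯.filter (fun T => Ψ T = j)).card) := by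
    have h1 : (Bd.card : ℝ) * (2:ℝ) ^ ((2*(m:ℝ)/(q:ℝ))) =
        ∑ Ψ ∈ Bd, (2:ℝ) ^ ((2*(m:ℝ)/(q:ℝ))) := by
      rw [Finset.sum_const, nsmul_eq_mul]
    rw [h1]
    have h2 : ∀ Ψ ∈ Bd, (2:ℝ) ^ ((2*(m:ℝ)/(q:ℝ))) ≤
        (2:ℝ) ^ (((𝒯.filter (fun T => Ψ T = j)).card : ℕ)) := by
      intro Ψ hΨ
      rw [hBd, Finset.mem_filter] at hΨ
      have hgt : 2*(m:ℝ)/(q:ℝ) < ((𝒯.filter (fun T => Ψ T = j)).card : ℝ) := by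
        have := hΨ.2
        push_neg at this
        calc 2*(m:ℝ)/(q:ℝ) = 2/(q:ℝ) * m := by ring
          _ < _ := this
      calc (2:ℝ) ^ ((2*(m:ℝ)/(q:ℝ))) ≤ (2:ℝ) ^ (((𝒯.filter (fun T => Ψ T = j)).card : ℝ)) :=
            Real.rpow_le_rpow_of_exponent_le one_le_two hgt.le
        _ = _ := Real.rpow_natCast 2 _
    calc ∑ Ψ ∈ Bd, (2:ℝ) ^ ((2*(m:ℝ)/(q:ℝ)))
        ≤ ∑ Ψ ∈ Bd, (2:ℝ) ^ (((𝒯.filter (fun T => Ψ T = j)).card : ℕ)) :=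
          Finset.sum_le_sum h2
      _ ≤ _ := Finset.sum_le_sum_of_subset_of_nonneg (Finset.subset_univ _)
          (fun _ _ _ => by positivity)
  have stepB : ((q:ℝ)+1) ^ m * (q:ℝ) ^ (K - m) ≤
      (q:ℝ) ^ K * (2:ℝ) ^ ((3*(m:ℝ)/(2*(q:ℝ)))) := by
    have hb := aux_base q hq
    have h1 : ((q:ℝ)+1) ^ m ≤ ((q:ℝ) * (2:ℝ) ^ ((3:ℝ)/(2*(q:ℝ)))) ^ m :=
      pow_le_pow_left₀ (by positivity) hb m
    have h2 : ((q:ℝ) * (2:ℝ) ^ ((3:ℝ)/(2*(q:ℝ)))) ^ m =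
        (q:ℝ) ^ m * (2:ℝ) ^ ((3*(m:ℝ)/(2*(q:ℝ)))) := by
      rw [mul_pow, ← Real.rpow_natCast ((2:ℝ) ^ ((3:ℝ)/(2*(q:ℝ)))) m,
        ← Real.rpow_mul (by norm_num : (0:ℝ) ≤ 2)]
      congr 1
      ring
    have h3 : (q:ℝ) ^ m * (q:ℝ) ^ (K - m) = (q:ℝ) ^ K := by
      rw [← pow_add]; congr 1; omega
    calc ((q:ℝ)+1) ^ m * (q:ℝ) ^ (K - m)
        ≤ ((q:ℝ) * (2:ℝ) ^ ((3:ℝ)/(2*(q:ℝ)))) ^ m * (q:ℝ) ^ (K - m) := by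
          apply mul_le_mul_of_nonneg_right h1 (by positivity)
      _ = (q:ℝ) ^ K * (2:ℝ) ^ ((3*(m:ℝ)/(2*(q:ℝ)))) := by rw [h2]; rw [← h3]; ring
  have hc : (0:ℝ) < (2:ℝ) ^ ((2*(m:ℝ)/(q:ℝ))) := Real.rpow_pos_of_pos two_pos _
  have key : (Bd.card : ℝ) * (2:ℝ) ^ ((2*(m:ℝ)/(q:ℝ))) ≤
      (q:ℝ) ^ K * (2:ℝ) ^ ((3*(m:ℝ)/(2*(q:ℝ)))) := by
    calc _ ≤ _ := stepA
      _ = ((q:ℝ)+1) ^ m * (q:ℝ) ^ (K - m) := aux_mgf q 𝒯 j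
      _ ≤ _ := stepB
  have : (Bd.card : ℝ) ≤ (q:ℝ) ^ K * (2:ℝ) ^ ((3*(m:ℝ)/(2*(q:ℝ)))) / (2:ℝ) ^ ((2*(m:ℝ)/(q:ℝ))) :=
    (le_div_iff₀ hc).mpr key
  calc (Bd.card : ℝ) ≤ _ := this
    _ = (q:ℝ) ^ K * (2:ℝ) ^ (-(m:ℝ)/(2*(q:ℝ))) := by
      have hq0 : (q:ℝ) ≠ 0 := ne_of_gt hqpos
      rw [mul_div_assoc, ← Real.rpow_sub two_pos,
        show (3*(m:ℝ)/(2*(q:ℝ)) - 2*(m:ℝ)/(q:ℝ)) = -(m:ℝ)/(2*(q:ℝ)) from by field_simp; ring]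

lemma aux_count_lower {N N₀ : ℕ} (Q : Finset (Fin N)) (hc : Q.card ≤ N₀) :
    (N - Q.card).choose (N₀ - Q.card) ≤
      (Finset.univ.filter
        (fun T : {S : Finset (Fin N) // S.card = N₀} => Q ⊆ T.1)).card := by
  set D := ((Finset.univ : Finset (Fin N)) \ Q).powersetCard (N₀ - Q.card) with hD
  have hDcard : D.card = (N - Q.card).choose (N₀ - Q.card) := by
    rw [hD, Finset.card_powersetCard, Finset.card_sdiff_of_subset (Finset.subset_univ _),
      Finset.card_univ, Fintype.card_fin]
  rw [← hDcard]
  apply Finset.card_le_card_of_surjOn (fun T => T.1 \ Q)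
  intro S hS
  rw [Finset.mem_coe, hD, Finset.mem_powersetCard] at hS
  obtain ⟨hSsub, hScard⟩ := hS
  have hdisj : Disjoint Q S := by
    rw [Finset.disjoint_right]
    intro a haS haQ
    have := hSsub haS
    simp [haQ] at this
  have hTcard : (Q ∪ S).card = N₀ := by
    rw [Finset.card_union_of_disjoint hdisj, hScard]
    omega
  refine ⟨⟨Q ∪ S, hTcard⟩, ?_, ?_⟩
  · simp [Finset.mem_coe, Finset.mem_filter]
  · simp only
    exact Finset.union_sdiff_cancel_left hdisj

lemma aux_Qcount (N R : ℕ) (hRN : R + 1 ≤ N) :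
    (((Finset.univ : Finset (Finset (Fin N)))).filter (fun Q => Q.card ≤ R)).card ≤
      N ^ (R + 1) := by
  have hsub : ((Finset.univ : Finset (Finset (Fin N)))).filter (fun Q => Q.card ≤ R) ⊆
      (Finset.range (R+1)).biUnion
        (fun i => (Finset.univ : Finset (Fin N)).powersetCard i) := by
    intro Q hQ
    simp only [Finset.mem_filter] at hQ
    rw [Finset.mem_biUnion]
    exact ⟨Q.card, Finset.mem_range.mpr (by omega),
      Finset.mem_powersetCard.mpr ⟨Finset.subset_univ _, rfl⟩⟩
  calc _ ≤ _ := Finset.card_le_card hsub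
    _ ≤ ∑ i ∈ Finset.range (R+1), ((Finset.univ : Finset (Fin N)).powersetCard i).card :=
        Finset.card_biUnion_le
    _ ≤ ∑ i ∈ Finset.range (R+1), N ^ R := by
        apply Finset.sum_le_sum
        intro i hi
        rw [Finset.card_powersetCard, Finset.card_univ, Fintype.card_fin]
        calc N.choose i ≤ N ^ i := Nat.choose_le_pow N i
          _ ≤ N ^ R := Nat.pow_le_pow_right (by omega) (by simp at hi; omega)
    _ = (R+1) * N ^ R := by rw [Finset.sum_const, Finset.card_range, smul_eq_mul]
    _ ≤ N * N ^ R := Nat.mul_le_mul_right _ hRN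
    _ = N ^ (R+1) := by ring

lemma aux_qfactor (q B : ℕ) (hq : 0 < q) (hB : 16 * q ^ 3 ≤ B) :
    (q : ℝ) * (2:ℝ) ^ (-(B:ℝ)/(2*(q:ℝ))) ≤ (2:ℝ) ^ (-(B:ℝ)/(4*(q:ℝ)^2)) := by
  have hq1 : (1:ℝ) ≤ (q:ℝ) := by exact_mod_cast hq
  have hq0 : (q:ℝ) ≠ 0 := by positivity
  have hBr : 16 * (q:ℝ)^3 ≤ (B:ℝ) := by exact_mod_cast hB
  set e : ℝ := -(B:ℝ)/(4*(q:ℝ)^2) + (B:ℝ)/(2*(q:ℝ)) with he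
  have hqe : (q:ℝ) ≤ (2:ℝ) ^ e := by
    have h1 : (q:ℝ) ≤ (2:ℝ) ^ ((q:ℝ)) := by
      have := Nat.lt_two_pow_self (n := q)
      have h2 : (q:ℝ) ≤ ((2:ℕ) ^ q : ℕ) := by exact_mod_cast this.le
      calc (q:ℝ) ≤ ((2:ℕ) ^ q : ℕ) := h2
        _ = (2:ℝ) ^ (q:ℕ) := by push_cast; ring
        _ = (2:ℝ) ^ ((q:ℝ)) := (Real.rpow_natCast 2 q).symm
    have h3 : (q:ℝ) ≤ e := by
      rw [he]
      have key : -(B:ℝ)/(4*(q:ℝ)^2) + (B:ℝ)/(2*(q:ℝ)) = (B:ℝ)*(2*(q:ℝ)-1)/(4*(q:ℝ)^2) := by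
        field_simp; ring
      rw [key, le_div_iff₀ (by positivity)]
      nlinarith [hBr, hq1, sq_nonneg ((q:ℝ) - 1)]
    exact h1.trans (Real.rpow_le_rpow_of_exponent_le one_le_two h3)
  calc (q:ℝ) * (2:ℝ) ^ (-(B:ℝ)/(2*(q:ℝ)))
      ≤ (2:ℝ) ^ e * (2:ℝ) ^ (-(B:ℝ)/(2*(q:ℝ))) := by
        apply mul_le_mul_of_nonneg_right hqe (by positivity)
    _ = (2:ℝ) ^ (e + -(B:ℝ)/(2*(q:ℝ))) := (Real.rpow_add two_pos _ _).symm
    _ = (2:ℝ) ^ (-(B:ℝ)/(4*(q:ℝ)^2)) := by rw [he]; ring_nf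

/-- existence of a randomness extractor: there is a constant
`C ≥ 1` such that for all positive integers `N, N₀, R, q` with `6 ∣ N`,
`N₀ ≤ 2N/3`, `R ≤ N/6 ≤ N₀ − N/6`, and `3 log₂ q ≤ log₂ C(5N/6, N/6) − C`,
a uniformly random function `Ψ` from the `N₀`-element subsets of `[N]` to `[q]`
satisfies, with probability at least `1 − N^{R+1} · 2^{−C(5N/6,N/6)/(C q²)}`:
for every `Q ⊆ [N]` with `|Q| ≤ R` and every `j ∈ [q]`,
`P_{T ∼ Unif}( Ψ(T) = j | Q ⊆ T ) ≤ 2/q` (stated in the cross-multiplied form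
`#{T : Q ⊆ T, Ψ(T) = j} ≤ (2/q) · #{T : Q ⊆ T}`).  The probability over `Ψ` is
the normalized count of good functions among all functions. -/
theorem extractor_exists :
    ∃ C : ℝ, 1 ≤ C ∧
      ∀ N N₀ R q : ℕ, 0 < N → 0 < N₀ → 0 < R → 0 < q → 6 ∣ N →
        N₀ ≤ 2 * N / 3 → R ≤ N / 6 → N / 6 ≤ N₀ - N / 6 →
        3 * Real.logb 2 q ≤ Real.logb 2 (Nat.choose (5 * N / 6) (N / 6)) - C →
        (1 - (N : ℝ) ^ (R + 1) *
              (2 : ℝ) ^ (-((Nat.choose (5 * N / 6) (N / 6) : ℝ)) / (C * (q : ℝ) ^ 2))) *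
            (Fintype.card ({S : Finset (Fin N) // S.card = N₀} → Fin q)) ≤
          ((Finset.univ.filter
              (fun Ψ : {S : Finset (Fin N) // S.card = N₀} → Fin q =>
                ∀ Q : Finset (Fin N), Q.card ≤ R → ∀ j : Fin q,
                  ((Finset.univ.filter
                      (fun T : {S : Finset (Fin N) // S.card = N₀} =>
                        Q ⊆ T.1 ∧ Ψ T = j)).card : ℝ) ≤
                    (2 / (q : ℝ)) *
                      ((Finset.univ.filter
                          (fun T : {S : Finset (Fin N) // S.card = N₀} =>
                            Q ⊆ T.1)).card : ℝ))).card : ℝ) := by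
  refine ⟨4, by norm_num, ?_⟩
  intro N N₀ R q hN hN₀ hR hq hdvd h23 hR6 h66 hlog
  obtain ⟨t, rfl⟩ := hdvd
  have ht : 1 ≤ t := by omega
  have e1 : 6 * t / 6 = t := by omega
  have e2 : 5 * (6 * t) / 6 = 5 * t := by omega
  have e3 : 2 * (6 * t) / 3 = 4 * t := by omega
  rw [e3] at h23
  rw [e1] at hR6
  rw [e1] at h66
  rw [e1, e2] at hlog
  rw [e1, e2]
  have hN₀2 : 2 * t ≤ N₀ := by omega
  set B := Nat.choose (5 * t) t with hBdef
  have hBpos : 0 < B := Nat.choose_pos (by omega)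
  have hq1 : (1:ℝ) ≤ (q:ℝ) := by exact_mod_cast hq
  -- the hypothesis gives `16 q³ ≤ B`
  have hB : 16 * q ^ 3 ≤ B := by
    have hlhs : Real.logb 2 ((16 * q ^ 3 : ℕ) : ℝ) ≤ Real.logb 2 ((B : ℕ) : ℝ) := by
      push_cast
      rw [Real.logb_mul (by norm_num) (by positivity)]
      have h16 : Real.logb 2 (16:ℝ) = 4 := by
        rw [show (16:ℝ) = 2 ^ (4:ℕ) by norm_num, Real.logb_pow, Real.logb_self_eq_one] <;>
          norm_num
      rw [h16, Real.logb_pow]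
      push_cast
      linarith [hlog]
    have := (Real.logb_le_logb one_lt_two
      (by positivity : (0:ℝ) < ((16 * q ^ 3 : ℕ) : ℝ)) (by exact_mod_cast hBpos)).mp hlhs
    exact_mod_cast this
  set K := Fintype.card {S : Finset (Fin (6 * t)) // S.card = N₀} with hKdef
  have hcardfun : Fintype.card ({S : Finset (Fin (6 * t)) // S.card = N₀} → Fin q) = q ^ K := by
    rw [Fintype.card_fun, Fintype.card_fin]
  set P : ({S : Finset (Fin (6 * t)) // S.card = N₀} → Fin q) → Prop :=
    fun Ψ => ∀ Q : Finset (Fin (6 * t)), Q.card ≤ R → ∀ j : Fin q,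
      ((Finset.univ.filter
          (fun T : {S : Finset (Fin (6 * t)) // S.card = N₀} =>
            Q ⊆ T.1 ∧ Ψ T = j)).card : ℝ) ≤
        (2 / (q : ℝ)) *
          ((Finset.univ.filter
              (fun T : {S : Finset (Fin (6 * t)) // S.card = N₀} =>
                Q ⊆ T.1)).card : ℝ) with hP
  set Bad := Finset.univ.filter (fun Ψ => ¬ P Ψ) with hBad
  have hsplit : (Finset.univ.filter (fun Ψ => P Ψ)).card + Bad.card = q ^ K := by
    rw [hBad, Finset.card_filter_add_card_filter_not, Finset.card_univ, hcardfun]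
  -- per-pair bound
  have hpair : ∀ Q : Finset (Fin (6 * t)), Q.card ≤ R → ∀ j : Fin q,
      ((Finset.univ.filter (fun Ψ : {S : Finset (Fin (6 * t)) // S.card = N₀} → Fin q =>
          ¬ (((Finset.univ.filter
              (fun T : {S : Finset (Fin (6 * t)) // S.card = N₀} =>
                Q ⊆ T.1 ∧ Ψ T = j)).card : ℝ) ≤
            (2 / (q : ℝ)) *
              ((Finset.univ.filter
                  (fun T : {S : Finset (Fin (6 * t)) // S.card = N₀} =>
                    Q ⊆ T.1)).card : ℝ)))).card : ℝ)
        ≤ (q:ℝ) ^ K * (2:ℝ) ^ (-(B:ℝ)/(2*(q:ℝ))) := by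
    intro Q hQR j
    set 𝒯 := Finset.univ.filter
      (fun T : {S : Finset (Fin (6 * t)) // S.card = N₀} => Q ⊆ T.1) with h𝒯
    have hfil : ∀ Ψ : {S : Finset (Fin (6 * t)) // S.card = N₀} → Fin q,
        Finset.univ.filter (fun T : {S : Finset (Fin (6 * t)) // S.card = N₀} =>
          Q ⊆ T.1 ∧ Ψ T = j) = 𝒯.filter (fun T => Ψ T = j) := by
      intro Ψ
      rw [h𝒯, Finset.filter_filter]
    have hmB : B ≤ 𝒯.card := by
      calc B ≤ (6 * t - Q.card).choose t := Nat.choose_le_choose t (by omega)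
        _ ≤ (6 * t - Q.card).choose (N₀ - Q.card) := aux_choose_middle (by omega) (by omega)
        _ ≤ 𝒯.card := aux_count_lower Q (by omega)
    have heq : (Finset.univ.filter (fun Ψ : {S : Finset (Fin (6 * t)) // S.card = N₀} → Fin q =>
          ¬ (((Finset.univ.filter
              (fun T : {S : Finset (Fin (6 * t)) // S.card = N₀} =>
                Q ⊆ T.1 ∧ Ψ T = j)).card : ℝ) ≤
            (2 / (q : ℝ)) * ((𝒯.card : ℕ) : ℝ))))
        = Finset.univ.filter (fun Ψ : {S : Finset (Fin (6 * t)) // S.card = N₀} → Fin q =>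
          ¬ (((𝒯.filter (fun T => Ψ T = j)).card : ℝ) ≤ 2/(q:ℝ) * 𝒯.card)) := by
      apply Finset.filter_congr
      intro Ψ _
      rw [hfil Ψ]
    calc _ = ((Finset.univ.filter
          (fun Ψ : {S : Finset (Fin (6 * t)) // S.card = N₀} → Fin q =>
            ¬ (((𝒯.filter (fun T => Ψ T = j)).card : ℝ) ≤ 2/(q:ℝ) * 𝒯.card))).card : ℝ) := by
          rw [← heq]
      _ ≤ (q:ℝ) ^ K * (2:ℝ) ^ (-(𝒯.card:ℝ)/(2*(q:ℝ))) := aux_pair q hq 𝒯 j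
      _ ≤ (q:ℝ) ^ K * (2:ℝ) ^ (-(B:ℝ)/(2*(q:ℝ))) := by
          apply mul_le_mul_of_nonneg_left _ (by positivity)
          apply Real.rpow_le_rpow_of_exponent_le one_le_two
          have hm' : (B:ℝ) ≤ (𝒯.card:ℝ) := by exact_mod_cast hmB
          have hqpos : (0:ℝ) < (q:ℝ) := by linarith
          exact (div_le_div_iff_of_pos_right (by linarith : (0:ℝ) < 2*(q:ℝ))).mpr (neg_le_neg hm')
  -- union bound
  set Qs := ((Finset.univ : Finset (Finset (Fin (6 * t))))).filter (fun Q => Q.card ≤ R)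
    with hQs
  have hsub : Bad ⊆ Qs.biUnion (fun Q => Finset.univ.biUnion (fun j : Fin q =>
      Finset.univ.filter (fun Ψ : {S : Finset (Fin (6 * t)) // S.card = N₀} → Fin q =>
        ¬ (((Finset.univ.filter
            (fun T : {S : Finset (Fin (6 * t)) // S.card = N₀} =>
              Q ⊆ T.1 ∧ Ψ T = j)).card : ℝ) ≤
          (2 / (q : ℝ)) *
            ((Finset.univ.filter
                (fun T : {S : Finset (Fin (6 * t)) // S.card = N₀} =>
                  Q ⊆ T.1)).card : ℝ))))) := by
    intro Ψ hΨ
    rw [hBad, Finset.mem_filter] at hΨ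
    have hΨ2 := hΨ.2
    rw [hP] at hΨ2
    beta_reduce at hΨ2
    push_neg at hΨ2
    obtain ⟨Q, hQR, j, hbad⟩ := hΨ2
    rw [Finset.mem_biUnion]
    refine ⟨Q, by rw [hQs]; simp [hQR], ?_⟩
    rw [Finset.mem_biUnion]
    exact ⟨j, Finset.mem_univ j, Finset.mem_filter.mpr ⟨Finset.mem_univ Ψ, by push_neg; exact hbad⟩⟩
  have hcard1 : (Bad.card : ℝ) ≤ ∑ Q ∈ Qs, ∑ j : Fin q,
      ((Finset.univ.filter (fun Ψ : {S : Finset (Fin (6 * t)) // S.card = N₀} → Fin q =>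
        ¬ (((Finset.univ.filter
            (fun T : {S : Finset (Fin (6 * t)) // S.card = N₀} =>
              Q ⊆ T.1 ∧ Ψ T = j)).card : ℝ) ≤
          (2 / (q : ℝ)) *
            ((Finset.univ.filter
                (fun T : {S : Finset (Fin (6 * t)) // S.card = N₀} =>
                  Q ⊆ T.1)).card : ℝ)))).card : ℝ) := by
    have h1 : Bad.card ≤ ∑ Q ∈ Qs, ∑ j : Fin q,
        (Finset.univ.filter (fun Ψ : {S : Finset (Fin (6 * t)) // S.card = N₀} → Fin q =>
          ¬ (((Finset.univ.filter
              (fun T : {S : Finset (Fin (6 * t)) // S.card = N₀} =>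
                Q ⊆ T.1 ∧ Ψ T = j)).card : ℝ) ≤
            (2 / (q : ℝ)) *
              ((Finset.univ.filter
                  (fun T : {S : Finset (Fin (6 * t)) // S.card = N₀} =>
                    Q ⊆ T.1)).card : ℝ)))).card := by
      calc Bad.card ≤ _ := Finset.card_le_card hsub
        _ ≤ _ := Finset.card_biUnion_le.trans
            (Finset.sum_le_sum (fun Q _ => Finset.card_biUnion_le))
    exact_mod_cast h1
  have hQscount : (Qs.card : ℝ) ≤ ((6 * t : ℕ) : ℝ) ^ (R + 1) := by
    exact_mod_cast aux_Qcount (6 * t) R (by omega)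
  have hbadtotal : (Bad.card : ℝ) ≤
      ((6 * t : ℕ) : ℝ) ^ (R + 1) *
        (2:ℝ) ^ (-(B:ℝ) / (4 * (q:ℝ) ^ 2)) * (q:ℝ) ^ K := by
    have hstep : (Bad.card : ℝ) ≤ (Qs.card : ℝ) * ((q:ℝ) * ((q:ℝ) ^ K * (2:ℝ) ^ (-(B:ℝ)/(2*(q:ℝ))))) := by
      calc (Bad.card : ℝ) ≤ _ := hcard1
        _ ≤ ∑ Q ∈ Qs, ∑ _j : Fin q, (q:ℝ) ^ K * (2:ℝ) ^ (-(B:ℝ)/(2*(q:ℝ))) := by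
            apply Finset.sum_le_sum
            intro Q hQ
            apply Finset.sum_le_sum
            intro j _
            have hQR : Q.card ≤ R := by
              rw [hQs] at hQ; exact (Finset.mem_filter.mp hQ).2
            exact hpair Q hQR j
        _ = (Qs.card : ℝ) * ((q:ℝ) * ((q:ℝ) ^ K * (2:ℝ) ^ (-(B:ℝ)/(2*(q:ℝ))))) := by
            simp [Finset.sum_const, Finset.card_univ, mul_comm, mul_assoc, nsmul_eq_mul]
    have hfactor := aux_qfactor q B hq hB
    have hnn : (0:ℝ) ≤ (q:ℝ) ^ K := by positivity
    calc (Bad.card : ℝ) ≤ _ := hstep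
      _ ≤ ((6 * t : ℕ) : ℝ) ^ (R + 1) * ((q:ℝ) * ((q:ℝ) ^ K * (2:ℝ) ^ (-(B:ℝ)/(2*(q:ℝ))))) := by
          apply mul_le_mul_of_nonneg_right hQscount (by positivity)
      _ = ((6 * t : ℕ) : ℝ) ^ (R + 1) * (((q:ℝ) * (2:ℝ) ^ (-(B:ℝ)/(2*(q:ℝ)))) * (q:ℝ) ^ K) := by
          ring
      _ ≤ ((6 * t : ℕ) : ℝ) ^ (R + 1) * ((2:ℝ) ^ (-(B:ℝ) / (4 * (q:ℝ) ^ 2)) * (q:ℝ) ^ K) := by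
          apply mul_le_mul_of_nonneg_left _ (by positivity)
          exact mul_le_mul_of_nonneg_right hfactor hnn
      _ = _ := by ring
  -- conclude
  rw [hcardfun]
  have hGeq : ((Finset.univ.filter (fun Ψ => P Ψ)).card : ℝ) + (Bad.card : ℝ)
      = ((q:ℝ)) ^ K := by
    exact_mod_cast hsplit
  have hgoal : (1 - ((6 * t : ℕ) : ℝ) ^ (R + 1) *
      (2:ℝ) ^ (-(B:ℝ) / (4 * (q:ℝ) ^ 2))) * ((q:ℝ) ^ K) ≤
      ((Finset.univ.filter (fun Ψ => P Ψ)).card : ℝ) := by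
    have hexpand : (1 - ((6 * t : ℕ) : ℝ) ^ (R + 1) *
        (2:ℝ) ^ (-(B:ℝ) / (4 * (q:ℝ) ^ 2))) * ((q:ℝ) ^ K)
        = (q:ℝ) ^ K - ((6 * t : ℕ) : ℝ) ^ (R + 1) *
            (2:ℝ) ^ (-(B:ℝ) / (4 * (q:ℝ) ^ 2)) * (q:ℝ) ^ K := by ring
    rw [hexpand]
    linarith [hbadtotal, hGeq]
  calc (1 - ((6 * t : ℕ) : ℝ) ^ (R + 1) *
      (2:ℝ) ^ (-(B:ℝ) / (4 * (q:ℝ) ^ 2))) * ((q ^ K : ℕ) : ℝ)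
      = (1 - ((6 * t : ℕ) : ℝ) ^ (R + 1) *
          (2:ℝ) ^ (-(B:ℝ) / (4 * (q:ℝ) ^ 2))) * ((q:ℝ) ^ K) := by push_cast; ring
    _ ≤ _ := hgoal
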